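/- Fix b > 0 and an integer m ≥ 1, and adopt the double-factorial convention (−1)!! = 0!! = 1. Define F : (0,b) → ℝ by F(s) := [(2m)!!/(2m−1)!!]·(1/s)·[Σ_{i=1}^{m} [(2m−2i−1)!!/(2m−2i+2)!!]·(b²)^{i−1}·(b²−s²)^{m−i+1} − (b²)^{m}]. Then for every s ∈ (0,b): F'(s) = s^{−2}·(b² − s²)^{m}. -/

import Mathlib

open Set

/-- Double factorial with the convention `0!! = 1` (and, via ℕ-truncation of the
argument, `(−1)!! = dfac 0 = 1`). -/
def dfac : ℕ → ℕ
  | 0 => 1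
  | 1 => 1
  | n + 2 => (n + 2) * dfac n


lemma dfac_add_two (n : ℕ) : dfac (n + 2) = (n + 2) * dfac n := rfl

lemma dfac_pos (n : ℕ) : 0 < dfac n := by
  induction n using Nat.strong_induction_on with
  | _ n ih =>
    match n with
    | 0 => simp [dfac]
    | 1 => simp [dfac]
    | n + 2 => rw [dfac_add_two]; exact Nat.mul_pos (by omega) (ih n (by omega))

noncomputable def ee (j : ℕ) : ℝ := (dfac (2 * j - 1) : ℝ) / (dfac (2 * j + 2))

lemma key (k : ℕ) (u t : ℝ) :
    ((dfac (2 * k + 2) : ℝ) / (dfac (2 * k + 1))) *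
      (u ^ (k + 1)
        - (∑ j ∈ Finset.range (k + 1), ee j * u ^ (k - j) * t ^ (j + 1))
        - 2 * (u - t) *
          ∑ j ∈ Finset.range (k + 1), ((j : ℝ) + 1) * ee j * u ^ (k - j) * t ^ j)
      = t ^ (k + 1) := by
  induction k with
  | zero => simp [ee, dfac]; ring
  | succ k ih =>
    have h4 : (dfac (2 * (k+1) + 2) : ℝ) = (2 * k + 4) * dfac (2 * k + 2) := by
      rw [show 2 * (k+1) + 2 = (2 * k + 2) + 2 by ring, dfac_add_two]; push_cast; ring
    have h3 : (dfac (2 * (k+1) + 1) : ℝ) = (2 * k + 3) * dfac (2 * k + 1) := by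
      rw [show 2 * (k+1) + 1 = (2 * k + 1) + 2 by ring, dfac_add_two]; push_cast; ring
    have hek : ee (k + 1) = (dfac (2 * k + 1) : ℝ) / ((2 * k + 4) * dfac (2 * k + 2)) := by
      rw [ee, show 2 * (k+1) - 1 = 2 * k + 1 by omega,
        show 2 * (k+1) + 2 = (2 * k + 2) + 2 by ring, dfac_add_two]; push_cast; ring_nf
    have hsum1 : ∀ j ∈ Finset.range (k + 1),
        ee j * u ^ (k + 1 - j) * t ^ (j + 1) = u * (ee j * u ^ (k - j) * t ^ (j + 1)) := by
      intro j hj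
      have hjk := Finset.mem_range.mp hj
      rw [show k + 1 - j = (k - j) + 1 by omega]
      ring
    have hsum2 : ∀ j ∈ Finset.range (k + 1),
        ((j : ℝ) + 1) * ee j * u ^ (k + 1 - j) * t ^ j
          = u * (((j : ℝ) + 1) * ee j * u ^ (k - j) * t ^ j) := by
      intro j hj
      have hjk := Finset.mem_range.mp hj
      rw [show k + 1 - j = (k - j) + 1 by omega]
      ring
    set S := ∑ j ∈ Finset.range (k + 1), ee j * u ^ (k - j) * t ^ (j + 1) with hS
    set K := ∑ j ∈ Finset.range (k + 1), ((j : ℝ) + 1) * ee j * u ^ (k - j) * t ^ j with hK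
    have d1pos : (0:ℝ) < (dfac (2 * k + 1) : ℝ) := by exact_mod_cast dfac_pos _
    have d2pos : (0:ℝ) < (dfac (2 * k + 2) : ℝ) := by exact_mod_cast dfac_pos _
    have E : u ^ (k + 1) - S - 2 * (u - t) * K
        = t ^ (k + 1) * (dfac (2 * k + 1) : ℝ) / (dfac (2 * k + 2)) := by
      rw [eq_div_iff d2pos.ne']
      have h := ih
      field_simp at h
      linarith [h]
    have hA : ∑ j ∈ Finset.range (k + 1 + 1), ee j * u ^ (k + 1 - j) * t ^ (j + 1)
        = u * S + ee (k + 1) * t ^ (k + 1 + 1) := by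
      rw [Finset.sum_range_succ, Finset.sum_congr rfl hsum1, ← Finset.mul_sum, ← hS]
      simp
    have hB : ∑ j ∈ Finset.range (k + 1 + 1), ((j:ℝ) + 1) * ee j * u ^ (k + 1 - j) * t ^ j
        = u * K + ((k:ℝ) + 2) * ee (k + 1) * t ^ (k + 1) := by
      rw [Finset.sum_range_succ, Finset.sum_congr rfl hsum2, ← Finset.mul_sum, ← hK,
        Nat.sub_self, pow_zero]
      push_cast
      ring
    rw [hA, hB, h4, h3, hek]
    have hSval : S = u ^ (k + 1) - 2 * (u - t) * K
        - t ^ (k + 1) * (dfac (2 * k + 1) : ℝ) / (dfac (2 * k + 2)) := by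
      linarith [E]
    rw [hSval]
    field_simp
    ring

lemma reindex (m : ℕ) (u t : ℝ) :
    (∑ i ∈ Finset.Icc 1 m,
        ((dfac (2 * m - 2 * i - 1) : ℝ) / (dfac (2 * m - 2 * i + 2))) *
          u ^ (i - 1) * t ^ (m - i + 1))
      = ∑ j ∈ Finset.range m, ee j * u ^ (m - 1 - j) * t ^ (j + 1) := by
  apply Finset.sum_nbij' (i := fun a => m - a) (j := fun a => m - a)
  · intro a ha
    simp only [Finset.mem_Icc] at ha
    simp only [Finset.mem_range]
    omega
  · intro a ha
    simp only [Finset.mem_range] at ha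
    simp only [Finset.mem_Icc]
    omega
  · intro a ha
    simp only [Finset.mem_Icc] at ha
    omega
  · intro a ha
    simp only [Finset.mem_range] at ha
    omega
  · intro a ha
    simp only [Finset.mem_Icc] at ha
    rw [ee, show 2 * (m - a) - 1 = 2 * m - 2 * a - 1 by omega,
      show 2 * (m - a) + 2 = 2 * m - 2 * a + 2 by omega,
      show m - 1 - (m - a) = a - 1 by omega]

/-- Lemma 2.2(b), odd case n = 2m+1: the displayed F is an
antiderivative of s⁻²(b²−s²)^m on (0,b). -/
theorem stmt_12 (b : ℝ) (hb : 0 < b) (m : ℕ) (hm : 1 ≤ m) (F : ℝ → ℝ)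
    (hF : ∀ s : ℝ, F s =
      ((dfac (2 * m) : ℝ) / (dfac (2 * m - 1))) * (1 / s) *
        ((∑ i ∈ Finset.Icc 1 m,
          ((dfac (2 * m - 2 * i - 1) : ℝ) / (dfac (2 * m - 2 * i + 2))) *
            (b ^ 2) ^ (i - 1) * (b ^ 2 - s ^ 2) ^ (m - i + 1)) - (b ^ 2) ^ m)) :
    ∀ s ∈ Ioo (0 : ℝ) b,
      HasDerivAt F ((b ^ 2 - s ^ 2) ^ m / s ^ 2) s := by
  obtain ⟨k, rfl⟩ : ∃ k, m = k + 1 := ⟨m - 1, by omega⟩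
  intro s hs
  have hs0 : (0 : ℝ) < s := hs.1
  have hsne : s ≠ 0 := hs0.ne'
  set u : ℝ := b ^ 2 with hu
  have hFeq : F = fun x : ℝ =>
      ((dfac (2 * k + 2) : ℝ) / (dfac (2 * k + 1))) *
        ((1 / x) *
          ((∑ j ∈ Finset.range (k + 1), ee j * u ^ (k - j) * (u - x ^ 2) ^ (j + 1))
            - u ^ (k + 1))) := by
    funext x
    rw [hF x, reindex, show 2 * (k + 1) - 1 = 2 * k + 1 by omega,
      show 2 * (k + 1) = 2 * k + 2 by ring]
    simp only [show k + 1 - 1 = k from rfl]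
    ring
  rw [hFeq]
  have hinv : HasDerivAt (fun x : ℝ => 1 / x) (-(1 / s ^ 2)) s := by
    simpa [one_div] using (hasDerivAt_inv hsne)
  have hg : HasDerivAt
      (fun x : ℝ =>
        (∑ j ∈ Finset.range (k + 1), ee j * u ^ (k - j) * (u - x ^ 2) ^ (j + 1))
          - u ^ (k + 1))
      (∑ j ∈ Finset.range (k + 1),
        ee j * u ^ (k - j) * (((j : ℝ) + 1) * (u - s ^ 2) ^ j * (-(2 * s)))) s := by
    apply HasDerivAt.sub_const
    apply HasDerivAt.fun_sum
    intro j hj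
    have h1 : HasDerivAt (fun x : ℝ => u - x ^ 2) (-(2 * s)) s := by
      simpa using (hasDerivAt_pow 2 s).const_sub u
    have h2 := (h1.pow (j + 1)).const_mul (ee j * u ^ (k - j))
    refine h2.congr_deriv ?_
    push_cast [Nat.add_sub_cancel]
    ring
  have hmain := (hinv.mul hg).const_mul ((dfac (2 * k + 2) : ℝ) / (dfac (2 * k + 1)))
  refine hmain.congr_deriv ?_
  symm
  have hkey := key k u (u - s ^ 2)
  rw [show u - (u - s ^ 2) = s ^ 2 by ring] at hkey
  have hD : (∑ j ∈ Finset.range (k + 1),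
        ee j * u ^ (k - j) * (((j : ℝ) + 1) * (u - s ^ 2) ^ j * (-(2 * s))))
      = (-(2 * s)) * ∑ j ∈ Finset.range (k + 1),
          ((j : ℝ) + 1) * ee j * u ^ (k - j) * (u - s ^ 2) ^ j := by
    rw [Finset.mul_sum]
    exact Finset.sum_congr rfl fun j _ => by ring
  rw [hD]
  set C := ((dfac (2 * k + 2) : ℝ) / (dfac (2 * k + 1))) with hC
  set S := ∑ j ∈ Finset.range (k + 1), ee j * u ^ (k - j) * (u - s ^ 2) ^ (j + 1) with hSd
  set K := ∑ j ∈ Finset.range (k + 1),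
      ((j : ℝ) + 1) * ee j * u ^ (k - j) * (u - s ^ 2) ^ j with hKd
  rw [← hkey]
  field_simp
  ring
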